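/- There is no jointly measurable process on [0,T]×Ω (with respect to B([0,T])⊗F) such that for almost every t the random variables ξ_t are pairwise independent, non-degenerate (e.g., uniformly distributed on [0,1]), in the sense that any B([0,T])⊗F-measurable process whose random variables (ξ_t) are essentially pairwise independent must be such that for Lebesgue-a.e. t, ξ_t is almost surely constant. -/

import Mathlib

open MeasureTheory

/-- A bounded-measurability criterion for integrability on a finite measure space. -/
lemma integrable_of_bdd' {α : Type*} [MeasurableSpace α] {ν : Measure α} [IsFiniteMeasure ν]
    {f : α → ℝ} (hm : AEStronglyMeasurable f ν) {C : ℝ} (h : ∀ x, |f x| ≤ C) :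
    Integrable f ν :=
  (integrable_const C).mono' hm (Filter.Eventually.of_forall (by simpa [Real.norm_eq_abs] using h))

/-- If an integrable function has vanishing integral on all rational open intervals,
it vanishes a.e. -/
lemma aux_ae_zero (μ : Measure ℝ) [IsFiniteMeasure μ] {f : ℝ → ℝ}
    (hf : Integrable f μ)
    (h : ∀ q r : ℚ, ∫ x in Set.Ioo (q : ℝ) (r : ℝ), f x ∂μ = 0) :
    f =ᵐ[μ] 0 := by
  set F : ℝ → ENNReal := fun x => ENNReal.ofReal (f x) with hF
  set G : ℝ → ENNReal := fun x => ENNReal.ofReal (-f x) with hG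
  have hFm : AEMeasurable F μ :=
    ENNReal.measurable_ofReal.comp_aemeasurable hf.aemeasurable
  have hGm : AEMeasurable G μ :=
    ENNReal.measurable_ofReal.comp_aemeasurable hf.aemeasurable.neg
  have hFfin : ∫⁻ x, F x ∂μ ≠ ⊤ := by
    refine ne_top_of_le_ne_top hf.hasFiniteIntegral.ne ?_
    exact lintegral_mono fun x => Real.ofReal_le_enorm (f x)
  have hGfin : ∫⁻ x, G x ∂μ ≠ ⊤ := by
    refine ne_top_of_le_ne_top hf.neg.hasFiniteIntegral.ne ?_
    exact lintegral_mono fun x => Real.ofReal_le_enorm (-f x)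
  haveI i1 : IsFiniteMeasure (μ.withDensity F) :=
    isFiniteMeasure_withDensity_ofReal hf.hasFiniteIntegral
  haveI i2 : IsFiniteMeasure (μ.withDensity G) :=
    isFiniteMeasure_withDensity_ofReal hf.neg.hasFiniteIntegral
  have key : μ.withDensity F = μ.withDensity G := by
    refine Real.measure_ext_Ioo_rat fun q r => ?_
    rw [withDensity_apply _ measurableSet_Ioo, withDensity_apply _ measurableSet_Ioo]
    have hint : Integrable f (μ.restrict (Set.Ioo (q : ℝ) r)) := hf.restrict
    have heq := integral_eq_lintegral_pos_part_sub_lintegral_neg_part hint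
    rw [h q r] at heq
    have hA : ∫⁻ x in Set.Ioo (q : ℝ) r, F x ∂μ ≠ ⊤ :=
      ne_top_of_le_ne_top hFfin (setLIntegral_le_lintegral _ _)
    have hB : ∫⁻ x in Set.Ioo (q : ℝ) r, G x ∂μ ≠ ⊤ :=
      ne_top_of_le_ne_top hGfin (setLIntegral_le_lintegral _ _)
    have : (∫⁻ x in Set.Ioo (q : ℝ) r, F x ∂μ).toReal
        = (∫⁻ x in Set.Ioo (q : ℝ) r, G x ∂μ).toReal := by
      simp only [hF, hG]
      linarith [heq.symm]
    exact (ENNReal.toReal_eq_toReal_iff' hA hB).mp this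
  have hFG : F =ᵐ[μ] G := (withDensity_eq_iff hFm hGm hFfin).mp key
  filter_upwards [hFG] with x hx
  simp only [hF, hG] at hx
  rcases lt_trichotomy (f x) 0 with hlt | heq | hgt
  · exfalso
    have h0 : ENNReal.ofReal (f x) = 0 := ENNReal.ofReal_eq_zero.mpr hlt.le
    rw [h0] at hx
    exact (ENNReal.ofReal_pos.mpr (neg_pos.mpr hlt)).ne' hx.symm
  · simpa using heq
  · exfalso
    have h0 : ENNReal.ofReal (-f x) = 0 := ENNReal.ofReal_eq_zero.mpr (by linarith)
    rw [h0] at hx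
    exact (ENNReal.ofReal_pos.mpr hgt).ne' hx

set_option maxHeartbeats 1000000 in
/-- Any jointly measurable, essentially pairwise independent process must be
essentially degenerate: for Lebesgue-a.e. `t`, `ξ t` is a.s. constant. -/
theorem stmt0 {Ω : Type*} [MeasurableSpace Ω] (P : Measure Ω) [IsProbabilityMeasure P]
    (T : ℝ) (hT : 0 < T) (ξ : ℝ → Ω → ℝ)
    (hmeas : Measurable fun p : ℝ × Ω => ξ p.1 p.2)
    (hindep : ∀ᵐ t ∂(volume.restrict (Set.Icc 0 T)),
      ∀ᵐ s ∂(volume.restrict (Set.Icc 0 T)), ProbabilityTheory.IndepFun (ξ t) (ξ s) P) :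
    ∀ᵐ t ∂(volume.restrict (Set.Icc 0 T)), ∃ c : ℝ, ∀ᵐ ω ∂P, ξ t ω = c := by
  classical
  set μ : Measure ℝ := volume.restrict (Set.Icc 0 T) with hμdef
  haveI : IsFiniteMeasure μ := by
    constructor
    rw [hμdef, Measure.restrict_apply_univ]
    exact measure_Icc_lt_top
  -- the truncated process
  set Y : ℝ → Ω → ℝ := fun t ω => Real.arctan (ξ t ω) with hYdef
  have hYm : Measurable (fun p : ℝ × Ω => Y p.1 p.2) :=
    Real.continuous_arctan.measurable.comp hmeas
  have hYt : ∀ t, Measurable (Y t) := fun t => hYm.comp measurable_prodMk_left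
  have hYb : ∀ t ω, |Y t ω| ≤ Real.pi / 2 := fun t ω =>
    abs_le.2 ⟨(Real.neg_pi_div_two_lt_arctan _).le, (Real.arctan_lt_pi_div_two _).le⟩
  set g : ℝ → ℝ := fun t => ∫ ω, Y t ω ∂P with hgdef
  have hgm : StronglyMeasurable g := hYm.stronglyMeasurable.integral_prod_right'
  have hgb : ∀ t, |g t| ≤ Real.pi / 2 := by
    intro t
    rw [← Real.norm_eq_abs]
    calc ‖∫ ω, Y t ω ∂P‖ ≤ Real.pi / 2 * (P Set.univ).toReal := by
          refine norm_integral_le_of_norm_le_const ?_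
          exact Filter.Eventually.of_forall fun ω => by
            simpa [Real.norm_eq_abs] using hYb t ω
      _ = Real.pi / 2 := by simp
  -- centered process
  set Z : ℝ → Ω → ℝ := fun t ω => Y t ω - g t with hZdef
  have hZm : Measurable (fun p : ℝ × Ω => Z p.1 p.2) :=
    hYm.sub (hgm.measurable.comp measurable_fst)
  have hZt : ∀ t, Measurable (Z t) := fun t => (hYt t).sub measurable_const
  have hZb : ∀ t ω, |Z t ω| ≤ Real.pi := by
    intro t ω
    have h1 := hYb t ω
    have h2 := hgb t
    calc |Y t ω - g t| ≤ |Y t ω| + |g t| := abs_sub _ _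
      _ ≤ Real.pi := by linarith
  have hYint : ∀ t, Integrable (Y t) P :=
    fun t => integrable_of_bdd' (hYt t).aestronglyMeasurable (hYb t)
  -- pairwise vanishing covariances
  have hYind : ∀ᵐ t ∂μ, ∀ᵐ s ∂μ, ∫ ω, Z t ω * Z s ω ∂P = 0 := by
    filter_upwards [hindep] with t ht
    filter_upwards [ht] with s hst
    have hI : ProbabilityTheory.IndepFun (Y t) (Y s) P :=
      hst.comp Real.continuous_arctan.measurable Real.continuous_arctan.measurable
    have hmul : ∫ ω, Y t ω * Y s ω ∂P = g t * g s := by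
      have := hI.integral_mul_eq_mul_integral (hYint t).aestronglyMeasurable (hYint s).aestronglyMeasurable
      simpa [Pi.mul_apply, hgdef] using this
    have iYtYs : Integrable (fun ω => Y t ω * Y s ω) P := by
      refine integrable_of_bdd' ((hYt t).mul (hYt s)).aestronglyMeasurable
        (C := Real.pi / 2 * (Real.pi / 2)) fun ω => ?_
      rw [abs_mul]
      exact mul_le_mul (hYb t ω) (hYb s ω) (abs_nonneg _) (by positivity)
    have e1 : (fun ω => Z t ω * Z s ω)
        = fun ω => (Y t ω * Y s ω - g t * Y s ω) - (g s * Y t ω - g t * g s) :=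
      funext fun ω => by simp only [hZdef]; ring
    have hint1 : Integrable (fun ω => Y t ω * Y s ω - g t * Y s ω) P :=
      iYtYs.sub ((hYint s).const_mul _)
    have hint2 : Integrable (fun ω => g s * Y t ω - g t * g s) P :=
      ((hYint t).const_mul _).sub (integrable_const _)
    rw [e1, integral_sub hint1 hint2,
      integral_sub iYtYs ((hYint s).const_mul _),
      integral_sub ((hYint t).const_mul _) (integrable_const _),
      integral_const_mul, integral_const_mul, integral_const, hmul]
    simp only [probReal_univ, one_smul]
    have hgs : ∫ ω, Y s ω ∂P = g s := rfl
    have hgt : ∫ ω, Y t ω ∂P = g t := rfl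
    rw [hgs, hgt]
    ring
  -- product a.e. statement
  have hset : MeasurableSet {p : ℝ × ℝ | ∫ ω, Z p.1 ω * Z p.2 ω ∂P ≠ 0} := by
    have hZprodm : Measurable (fun q : (ℝ × ℝ) × Ω => Z q.1.1 q.2 * Z q.1.2 q.2) := by
      exact (hZm.comp (measurable_fst.fst.prodMk measurable_snd)).mul
        (hZm.comp (measurable_fst.snd.prodMk measurable_snd))
    have hH : StronglyMeasurable (fun p : ℝ × ℝ => ∫ ω, Z p.1 ω * Z p.2 ω ∂P) :=
      hZprodm.stronglyMeasurable.integral_prod_right'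
    exact (hH.measurable (measurableSet_singleton (0 : ℝ))).compl
  have hprodnull : ∀ᵐ p ∂(μ.prod μ), ∫ ω, Z p.1 ω * Z p.2 ω ∂P = 0 := by
    rw [ae_iff]
    refine (Measure.measure_prod_null (by exact hset)).mpr ?_
    filter_upwards [hYind] with t ht
    have := ht
    rw [ae_iff] at this
    simpa [Set.preimage] using this
  -- integrals over rational intervals vanish a.s.
  have hW : ∀ q r : ℚ, ∀ᵐ ω ∂P,
      ∫ t in Set.Ioo (q : ℝ) (r : ℝ), Z t ω ∂μ = 0 := by
    intro q r
    set ν : Measure ℝ := μ.restrict (Set.Ioo (q : ℝ) (r : ℝ)) with hνdef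
    have hWm : StronglyMeasurable (fun ω => ∫ t, Z t ω ∂ν) :=
      ((hZm.comp measurable_swap).stronglyMeasurable).integral_prod_right'
    have hWb : ∀ ω, |∫ t, Z t ω ∂ν| ≤ Real.pi * (ν Set.univ).toReal := by
      intro ω
      rw [← Real.norm_eq_abs]
      refine norm_integral_le_of_norm_le_const ?_
      exact Filter.Eventually.of_forall fun t => by
        simpa [Real.norm_eq_abs] using hZb t ω
    have iW2 : Integrable (fun ω => (∫ t, Z t ω ∂ν) * (∫ t, Z t ω ∂ν)) P := by
      refine integrable_of_bdd' (hWm.mul hWm).aestronglyMeasurable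
        (C := (Real.pi * (ν Set.univ).toReal) * (Real.pi * (ν Set.univ).toReal)) fun ω => ?_
      rw [abs_mul]
      exact mul_le_mul (hWb ω) (hWb ω) (abs_nonneg _)
        (by positivity)
    have key : ∫ ω, (∫ t, Z t ω ∂ν) * (∫ t, Z t ω ∂ν) ∂P = 0 := by
      have e : ∀ ω, (∫ t, Z t ω ∂ν) * (∫ t, Z t ω ∂ν)
          = ∫ p, Z p.1 ω * Z p.2 ω ∂(ν.prod ν) :=
        fun ω => (integral_prod_mul (fun t => Z t ω) (fun s => Z s ω)).symm
      have hint : Integrable (Function.uncurry fun ω (p : ℝ × ℝ) => Z p.1 ω * Z p.2 ω)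
          (P.prod (ν.prod ν)) := by
        refine integrable_of_bdd' ?_ (C := Real.pi * Real.pi) ?_
        · refine ((hZm.comp ((measurable_snd.fst).prodMk measurable_fst)).mul
            (hZm.comp ((measurable_snd.snd).prodMk measurable_fst))).aestronglyMeasurable
        · intro x
          rw [Function.uncurry, abs_mul]
          exact mul_le_mul (hZb _ _) (hZb _ _) (abs_nonneg _) Real.pi_pos.le
      have hae : (fun p : ℝ × ℝ => ∫ ω, Z p.1 ω * Z p.2 ω ∂P) =ᵐ[ν.prod ν]
          (fun _ => (0 : ℝ)) := by
        rw [hνdef, Measure.prod_restrict]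
        exact ae_restrict_of_ae hprodnull
      calc ∫ ω, (∫ t, Z t ω ∂ν) * (∫ t, Z t ω ∂ν) ∂P
          = ∫ ω, ∫ p, Z p.1 ω * Z p.2 ω ∂(ν.prod ν) ∂P := by simp only [e]
        _ = ∫ p, ∫ ω, Z p.1 ω * Z p.2 ω ∂P ∂(ν.prod ν) := integral_integral_swap hint
        _ = ∫ _p, (0 : ℝ) ∂(ν.prod ν) := integral_congr_ae hae
        _ = 0 := integral_zero _ _
    have hnn : (0 : Ω → ℝ) ≤ fun ω => (∫ t, Z t ω ∂ν) * (∫ t, Z t ω ∂ν) :=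
      fun ω => mul_self_nonneg _
    have hz := (integral_eq_zero_iff_of_nonneg hnn iW2).mp key
    filter_upwards [hz] with ω hω
    exact mul_self_eq_zero.mp hω
  have hA : ∀ᵐ ω ∂P, ∀ q r : ℚ, ∫ t in Set.Ioo (q : ℝ) (r : ℝ), Z t ω ∂μ = 0 :=
    ae_all_iff.mpr fun q => ae_all_iff.mpr fun r => hW q r
  have hZ0 : ∀ᵐ ω ∂P, ∀ᵐ t ∂μ, Z t ω = 0 := by
    filter_upwards [hA] with ω hω
    have hfi : Integrable (fun t => Z t ω) μ :=
      integrable_of_bdd' ((hZm.comp (measurable_id.prodMk measurable_const)).aestronglyMeasurable)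
        (fun t => hZb t ω)
    have := aux_ae_zero μ hfi hω
    filter_upwards [this] with t ht
    simpa using ht
  -- swap the order of a.e. quantifiers via Fubini
  have hset2 : MeasurableSet {p : ℝ × Ω | Z p.1 p.2 ≠ 0} :=
    (hZm (measurableSet_singleton (0 : ℝ))).compl
  have hset3 : MeasurableSet {q : Ω × ℝ | Z q.2 q.1 ≠ 0} :=
    ((hZm.comp measurable_swap) (measurableSet_singleton (0 : ℝ))).compl
  have h1 : (P.prod μ) {q : Ω × ℝ | Z q.2 q.1 ≠ 0} = 0 := by
    refine (Measure.measure_prod_null hset3).mpr ?_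
    filter_upwards [hZ0] with ω hω
    rw [ae_iff] at hω
    simpa [Set.preimage] using hω
  have h2 : (μ.prod P) {p : ℝ × Ω | Z p.1 p.2 ≠ 0} = 0 := by
    have hsw : (P.prod μ).map Prod.swap = μ.prod P := Measure.prod_swap
    rw [← hsw, Measure.map_apply measurable_swap hset2]
    exact h1
  have h3 : ∀ᵐ t ∂μ, ∀ᵐ ω ∂P, Z t ω = 0 := by
    have := (Measure.measure_prod_null hset2).mp h2
    filter_upwards [this] with t ht
    rw [ae_iff]
    simpa [Set.preimage] using ht
  -- conclusion
  filter_upwards [h3] with t ht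
  refine ⟨Real.tan (g t), ?_⟩
  filter_upwards [ht] with ω hω
  have harct : Real.arctan (ξ t ω) = g t := by
    have : Y t ω - g t = 0 := hω
    simp only [hYdef] at this
    linarith
  calc ξ t ω = Real.tan (Real.arctan (ξ t ω)) := (Real.tan_arctan _).symm
    _ = Real.tan (g t) := by rw [harct]
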